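/- Let H be a critical 3-hypergraph with |V(H)| ≥ 5. If v ∈ V(H) has degree 1 in the primality graph 𝒫(H), then V(H) \ ({v} ∪ N_{𝒫(H)}(v)) is a module of H − v. -/

import Mathlib

/-- `M` is a module of the hypergraph with vertex set `verts` and edge set `edges`. -/
def IsModule {α : Type*} [DecidableEq α] (verts : Finset α) (edges : Set (Finset α))
    (M : Finset α) : Prop :=
  M ⊆ verts ∧ ∀ e ∈ edges, (e ∩ M).Nonempty → (e \ M).Nonempty →
    ∃ m ∈ M, e ∩ M = {m} ∧ ∀ n ∈ M, (e \ {m}) ∪ {n} ∈ edges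

/-- `(verts, edges)` is a hypergraph: edges are nonempty subsets of `verts`. -/
def IsHypergraph {α : Type*} (verts : Finset α) (edges : Set (Finset α)) : Prop :=
  ∀ e ∈ edges, e ⊆ verts ∧ e.Nonempty

/-- `(verts, edges)` is a 3-hypergraph: edges are 3-element subsets of `verts`. -/
def Is3Hypergraph {α : Type*} (verts : Finset α) (edges : Set (Finset α)) : Prop :=
  ∀ e ∈ edges, e ⊆ verts ∧ e.card = 3

/-- Edges of the subhypergraph induced by `W`. -/
def induceEdges {α : Type*} (W : Finset α) (edges : Set (Finset α)) : Set (Finset α) :=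
  {e ∈ edges | e ⊆ W}

/-- A hypergraph is prime if it has at least 3 vertices and all its modules are trivial. -/
def IsPrime {α : Type*} [DecidableEq α] (verts : Finset α) (edges : Set (Finset α)) : Prop :=
  3 ≤ verts.card ∧ ∀ M, IsModule verts edges M → M = ∅ ∨ M = verts ∨ ∃ v, M = {v}

/-- A prime hypergraph is critical if removing any vertex destroys primality. -/
def IsCritical {α : Type*} [DecidableEq α] (verts : Finset α) (edges : Set (Finset α)) : Prop :=
  IsPrime verts edges ∧
    ∀ v ∈ verts, ¬ IsPrime (verts.erase v) (induceEdges (verts.erase v) edges)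

/-- Adjacency in the primality graph: `v ≠ w` and `H - {v, w}` is prime. -/
def PrimAdj {α : Type*} [DecidableEq α] (verts : Finset α) (edges : Set (Finset α))
    (v w : α) : Prop :=
  v ≠ w ∧ v ∈ verts ∧ w ∈ verts ∧
    IsPrime (verts \ {v, w}) (induceEdges (verts \ {v, w}) edges)

section Aux
variable {α : Type*} [DecidableEq α]

lemma mem_image_invol {σ : α → α} (hσ : Function.Involutive σ) {e : Finset α} {a : α} :
    a ∈ e.image σ ↔ σ a ∈ e := by
  constructor
  · intro h
    obtain ⟨b, hb, rfl⟩ := Finset.mem_image.1 h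
    rwa [hσ b]
  · intro h
    exact Finset.mem_image.2 ⟨σ a, h, hσ a⟩

omit [DecidableEq α] in
lemma induce_induce {W V : Finset α} (E : Set (Finset α)) (h : W ⊆ V) :
    induceEdges W (induceEdges V E) = induceEdges W E := by
  ext e
  constructor
  · rintro ⟨⟨he, _⟩, hw⟩; exact ⟨he, hw⟩
  · rintro ⟨he, hw⟩; exact ⟨⟨he, hw.trans h⟩, hw⟩

lemma module_restrict {V W : Finset α} {E : Set (Finset α)} {M : Finset α}
    (hM : IsModule V E M) : IsModule W (induceEdges W E) (M ∩ W) := by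
  refine ⟨Finset.inter_subset_right, ?_⟩
  rintro e ⟨he, hew⟩ hne1 hne2
  have h1' : (e ∩ M).Nonempty := by
    obtain ⟨a, ha⟩ := hne1
    rw [Finset.mem_inter, Finset.mem_inter] at ha
    exact ⟨a, Finset.mem_inter.2 ⟨ha.1, ha.2.1⟩⟩
  have h2' : (e \ M).Nonempty := by
    obtain ⟨a, ha⟩ := hne2
    rw [Finset.mem_sdiff] at ha
    exact ⟨a, Finset.mem_sdiff.2 ⟨ha.1, fun hm => ha.2 (Finset.mem_inter.2 ⟨hm, hew ha.1⟩)⟩⟩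
  obtain ⟨m, hm, heM, hswap⟩ := hM.2 e he h1' h2'
  have hme : m ∈ e := (Finset.mem_inter.1 (heM ▸ Finset.mem_singleton_self m)).1
  refine ⟨m, Finset.mem_inter.2 ⟨hm, hew hme⟩, ?_, ?_⟩
  · ext a
    simp only [Finset.mem_inter, Finset.mem_singleton]
    constructor
    · rintro ⟨ha, haM, -⟩
      have : a ∈ e ∩ M := Finset.mem_inter.2 ⟨ha, haM⟩
      rw [heM, Finset.mem_singleton] at this
      exact this
    · rintro rfl
      exact ⟨hme, hm, hew hme⟩
  · rintro n hn
    rw [Finset.mem_inter] at hn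
    refine ⟨hswap n hn.1, ?_⟩
    intro a ha
    rw [Finset.mem_union, Finset.mem_sdiff] at ha
    rcases ha with ⟨hae, -⟩ | ha
    · exact hew hae
    · rw [Finset.mem_singleton] at ha
      exact ha ▸ hn.2

lemma prime_image {σ : α → α} (hσ : Function.Involutive σ) {V1 V2 : Finset α}
    {E : Set (Finset α)}
    (hV : ∀ a, a ∈ V1 ↔ σ a ∈ V2)
    (hE1 : ∀ e ∈ E, e ⊆ V1 → e.image σ ∈ E)
    (hE2 : ∀ e ∈ E, e ⊆ V2 → e.image σ ∈ E)
    (hcard : V1.card = V2.card)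
    (hp : IsPrime V2 (induceEdges V2 E)) :
    IsPrime V1 (induceEdges V1 E) := by
  have hV' : ∀ a, a ∈ V2 ↔ σ a ∈ V1 := by
    intro a
    rw [hV (σ a), hσ a]
  have himg : ∀ S : Finset α, (S.image σ).image σ = S := by
    intro S
    ext a
    rw [mem_image_invol hσ, mem_image_invol hσ, hσ a]
  refine ⟨hcard ▸ hp.1, ?_⟩
  intro M hM
  set N := M.image σ with hN
  have hNmem : ∀ a, a ∈ N ↔ σ a ∈ M := fun a => mem_image_invol hσ
  have hsub12 : ∀ e : Finset α, e ⊆ V1 → e.image σ ⊆ V2 := by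
    intro e he a ha
    rw [mem_image_invol hσ] at ha
    have := he ha
    rwa [hV (σ a), hσ a] at this
  have hsub21 : ∀ e : Finset α, e ⊆ V2 → e.image σ ⊆ V1 := by
    intro e he a ha
    rw [mem_image_invol hσ] at ha
    have := he ha
    rwa [hV' (σ a), hσ a] at this
  have hNmod : IsModule V2 (induceEdges V2 E) N := by
    refine ⟨?_, ?_⟩
    · intro a ha
      rw [hNmem] at ha
      have := hM.1 ha
      rwa [hV (σ a), hσ a] at this
    · rintro e ⟨he, heV⟩ hne1 hne2
      set e' := e.image σ with he'
      have he'E : e' ∈ E := hE2 e he heV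
      have he'V : e' ⊆ V1 := hsub21 e heV
      have hee' : ∀ a, a ∈ e' ↔ σ a ∈ e := fun a => mem_image_invol hσ
      have h1' : (e' ∩ M).Nonempty := by
        obtain ⟨a, ha⟩ := hne1
        rw [Finset.mem_inter] at ha
        refine ⟨σ a, Finset.mem_inter.2 ⟨?_, ?_⟩⟩
        · rw [hee', hσ a]; exact ha.1
        · rw [← hNmem]; exact ha.2
      have h2' : (e' \ M).Nonempty := by
        obtain ⟨a, ha⟩ := hne2
        rw [Finset.mem_sdiff] at ha
        refine ⟨σ a, Finset.mem_sdiff.2 ⟨?_, ?_⟩⟩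
        · rw [hee', hσ a]; exact ha.1
        · intro hm
          exact ha.2 ((hNmem a).2 hm)
      obtain ⟨m, hm, heM, hswap⟩ := hM.2 e' ⟨he'E, he'V⟩ h1' h2'
      have hme' : m ∈ e' := (Finset.mem_inter.1 (heM ▸ Finset.mem_singleton_self m)).1
      refine ⟨σ m, by rw [hNmem, hσ m]; exact hm, ?_, ?_⟩
      · ext a
        rw [Finset.mem_inter, Finset.mem_singleton]
        constructor
        · rintro ⟨hae, haN⟩
          have : σ a ∈ e' ∩ M := Finset.mem_inter.2 ⟨by rw [hee', hσ a]; exact hae, (hNmem a).1 haN⟩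
          rw [heM, Finset.mem_singleton] at this
          rw [← this, hσ a]
        · rintro rfl
          exact ⟨by rw [← hee']; exact hme', (hNmem (σ m)).2 (by rw [hσ m]; exact hm)⟩
      · intro n hn
        have hnM : σ n ∈ M := (hNmem n).1 hn
        obtain ⟨hfE, hfV⟩ := hswap (σ n) hnM
        set f := (e' \ {m}) ∪ {σ n} with hf
        have key : f.image σ = (e \ {σ m}) ∪ {n} := by
          ext a
          rw [mem_image_invol hσ]
          simp only [hf, Finset.mem_union, Finset.mem_sdiff, Finset.mem_singleton]
          constructor
          · rintro (⟨h1, h2⟩ | h3)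
            · rw [hee' (σ a), hσ a] at h1
              exact Or.inl ⟨h1, fun hc => h2 (by rw [hc, hσ m])⟩
            · exact Or.inr (hσ.injective h3)
          · rintro (⟨h1, h2⟩ | rfl)
            · refine Or.inl ⟨?_, fun hc => h2 (by rw [← hc, hσ a])⟩
              rw [hee' (σ a), hσ a]
              exact h1
            · exact Or.inr rfl
        refine ⟨?_, ?_⟩
        · rw [← key]
          exact hE1 f hfE hfV
        · rw [← key]
          exact hsub12 f hfV
  rcases hp.2 N hNmod with h | h | ⟨u, hu⟩
  · left
    rw [hN] at h
    exact Finset.image_eq_empty.1 h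
  · right; left
    have hMN : N.image σ = M := himg M
    rw [h] at hMN
    rw [← hMN]
    ext a
    rw [mem_image_invol hσ]
    exact (hV a).symm
  · right; right
    refine ⟨σ u, ?_⟩
    have hMN : N.image σ = M := himg M
    rw [hu, Finset.image_singleton] at hMN
    exact hMN.symm

lemma swap_edge {verts : Finset α} {edges : Set (Finset α)}
    (h3 : Is3Hypergraph verts edges) {v w x : α}
    (hxw : x ≠ w)
    (hMmod : IsModule (verts.erase v) (induceEdges (verts.erase v) edges) ({x, w} : Finset α)) :
    ∀ e ∈ edges, v ∉ e → e.image (Equiv.swap w x) ∈ edges := by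
  have hσ : Function.Involutive (Equiv.swap w x : α → α) := fun a => Equiv.swap_apply_self w x a
  intro e he hve
  have hesub : e ⊆ verts := (h3 e he).1
  have hecard : e.card = 3 := (h3 e he).2
  have heV : e ⊆ verts.erase v := fun a ha =>
    Finset.mem_erase.2 ⟨fun h => hve (h ▸ ha), hesub ha⟩
  have heE : e ∈ induceEdges (verts.erase v) edges := ⟨he, heV⟩
  by_cases hw : w ∈ e <;> by_cases hx : x ∈ e
  · have : e.image (Equiv.swap w x) = e := by
      ext a
      rw [mem_image_invol hσ]
      rcases eq_or_ne a w with rfl | haw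
      · simp [Equiv.swap_apply_left, hw, hx]
      · rcases eq_or_ne a x with rfl | hax
        · simp [Equiv.swap_apply_right, hw, hx]
        · rw [Equiv.swap_apply_of_ne_of_ne haw hax]
    rwa [this]
  · have hne2 : (e \ ({x, w} : Finset α)).Nonempty := by
      rw [← Finset.card_pos]
      have h1 : ({x, w} : Finset α).card ≤ 2 := (Finset.card_insert_le x {w}).trans (by simp)
      have h2 : (e ∩ ({x, w} : Finset α)).card ≤ 2 :=
        le_trans (Finset.card_le_card Finset.inter_subset_right) h1
      have := Finset.card_sdiff_add_card_inter e ({x, w} : Finset α)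
      omega
    obtain ⟨m, hm, heM, hsw⟩ := hMmod.2 e heE ⟨w, Finset.mem_inter.2 ⟨hw, by simp⟩⟩ hne2
    have hmw : w = m := by
      have : w ∈ e ∩ ({x, w} : Finset α) := Finset.mem_inter.2 ⟨hw, by simp⟩
      rwa [heM, Finset.mem_singleton] at this
    subst hmw
    have hed : (e \ {w}) ∪ {x} ∈ induceEdges (verts.erase v) edges := hsw x (by simp)
    have : e.image (Equiv.swap w x) = (e \ {w}) ∪ {x} := by
      ext a
      rw [mem_image_invol hσ, Finset.mem_union, Finset.mem_sdiff, Finset.mem_singleton,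
        Finset.mem_singleton]
      rcases eq_or_ne a w with rfl | haw
      · simp [Equiv.swap_apply_left, hx, hxw.symm]
      · rcases eq_or_ne a x with rfl | hax
        · simp [Equiv.swap_apply_right, hw]
        · rw [Equiv.swap_apply_of_ne_of_ne haw hax]
          simp [haw, hax]
    rw [this]
    exact hed.1
  · have hne2 : (e \ ({x, w} : Finset α)).Nonempty := by
      rw [← Finset.card_pos]
      have h1 : ({x, w} : Finset α).card ≤ 2 := (Finset.card_insert_le x {w}).trans (by simp)
      have h2 : (e ∩ ({x, w} : Finset α)).card ≤ 2 :=
        le_trans (Finset.card_le_card Finset.inter_subset_right) h1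
      have := Finset.card_sdiff_add_card_inter e ({x, w} : Finset α)
      omega
    obtain ⟨m, hm, heM, hsw⟩ := hMmod.2 e heE ⟨x, Finset.mem_inter.2 ⟨hx, by simp⟩⟩ hne2
    have hmx : x = m := by
      have : x ∈ e ∩ ({x, w} : Finset α) := Finset.mem_inter.2 ⟨hx, by simp⟩
      rwa [heM, Finset.mem_singleton] at this
    subst hmx
    have hed : (e \ {x}) ∪ {w} ∈ induceEdges (verts.erase v) edges := hsw w (by simp)
    have : e.image (Equiv.swap w x) = (e \ {x}) ∪ {w} := by
      ext a
      rw [mem_image_invol hσ, Finset.mem_union, Finset.mem_sdiff, Finset.mem_singleton,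
        Finset.mem_singleton]
      rcases eq_or_ne a w with rfl | haw
      · simp [Equiv.swap_apply_left, hx]
      · rcases eq_or_ne a x with rfl | hax
        · simp [Equiv.swap_apply_right, hw, hxw]
        · rw [Equiv.swap_apply_of_ne_of_ne haw hax]
          simp [haw, hax]
    rw [this]
    exact hed.1
  · have : e.image (Equiv.swap w x) = e := by
      ext a
      rw [mem_image_invol hσ]
      rcases eq_or_ne a w with rfl | haw
      · simp [Equiv.swap_apply_left, hw, hx]
      · rcases eq_or_ne a x with rfl | hax
        · simp [Equiv.swap_apply_right, hw, hx]
        · rw [Equiv.swap_apply_of_ne_of_ne haw hax]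
    rwa [this]

end Aux

theorem primality_degree_one_complement_module {α : Type*} [DecidableEq α]
    (verts : Finset α) (edges : Set (Finset α)) (h3 : Is3Hypergraph verts edges)
    (hc : IsCritical verts edges) (h5 : 5 ≤ verts.card)
    (v w : α) (h1 : PrimAdj verts edges v w)
    (hdeg : ∀ w', PrimAdj verts edges v w' → w' = w) :
    IsModule (verts.erase v) (induceEdges (verts.erase v) edges) (verts \ {v, w}) := by
  obtain ⟨hvw, hv, hw, hprime⟩ := h1
  have hcard_erase : (verts.erase v).card = verts.card - 1 := Finset.card_erase_of_mem hv
  have hnp := hc.2 v hv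
  rw [IsPrime, not_and] at hnp
  have hnp2 := hnp (by omega)
  push_neg at hnp2
  obtain ⟨M', hM', hne0, hneV, hnes⟩ := hnp2
  have hWsub : verts \ {v, w} ⊆ verts.erase v := by
    intro a ha
    rw [Finset.mem_sdiff, Finset.mem_insert, Finset.mem_singleton] at ha
    push_neg at ha
    exact Finset.mem_erase.2 ⟨ha.2.1, ha.1⟩
  have hMw : ∀ a ∈ M', a ∉ verts \ {v, w} → a = w := by
    intro a ha hnw
    have haE := Finset.mem_erase.1 (hM'.1 ha)
    rw [Finset.mem_sdiff, Finset.mem_insert, Finset.mem_singleton] at hnw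
    push_neg at hnw
    rcases hnw haE.2 with h | h
    · exact absurd h haE.1
    · exact h
  have hrestrict := module_restrict (W := verts \ {v, w}) hM'
  rw [induce_induce edges hWsub] at hrestrict
  rcases hprime.2 _ hrestrict with h | h | ⟨x, hx⟩
  · -- M' ∩ W = ∅ : impossible
    exfalso
    have hsub : M' ⊆ {w} := by
      intro a ha
      by_cases haW : a ∈ verts \ {v, w}
      · exact absurd (h ▸ Finset.mem_inter.2 ⟨ha, haW⟩) (Finset.notMem_empty a)
      · rw [Finset.mem_singleton]
        exact hMw a ha haW
    rcases Finset.subset_singleton_iff.1 hsub with h0 | h0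
    · exact hne0.ne_empty h0
    · exact hnes w h0
  · -- M' ∩ W = W : M' = W, done
    have hWM : verts \ {v, w} ⊆ M' := Finset.inter_eq_right.1 h
    have hwM : w ∉ M' := by
      intro hwM
      apply hneV
      refine Finset.Subset.antisymm hM'.1 ?_
      intro a ha
      have haE := Finset.mem_erase.1 ha
      rcases eq_or_ne a w with rfl | haw
      · exact hwM
      · refine hWM ?_
        rw [Finset.mem_sdiff, Finset.mem_insert, Finset.mem_singleton]
        push_neg
        exact ⟨haE.2, haE.1, haw⟩
    have hMW : M' = verts \ {v, w} := by
      refine Finset.Subset.antisymm ?_ hWM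
      intro a ha
      by_cases haW : a ∈ verts \ {v, w}
      · exact haW
      · exact absurd ((hMw a ha haW) ▸ ha) hwM
    exact hMW ▸ hM'
  · -- M' ∩ W = {x} : contradiction with degree one
    exfalso
    have hxMW : x ∈ M' ∩ (verts \ {v, w}) := hx ▸ Finset.mem_singleton_self x
    rw [Finset.mem_inter] at hxMW
    obtain ⟨hxM, hxW⟩ := hxMW
    have hxfacts := hxW
    rw [Finset.mem_sdiff, Finset.mem_insert, Finset.mem_singleton] at hxfacts
    push_neg at hxfacts
    obtain ⟨hxverts, hxv, hxw⟩ := hxfacts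
    have hsub : M' ⊆ {x, w} := by
      intro a ha
      by_cases haW : a ∈ verts \ {v, w}
      · have : a ∈ M' ∩ (verts \ {v, w}) := Finset.mem_inter.2 ⟨ha, haW⟩
        rw [hx, Finset.mem_singleton] at this
        simp [this]
      · simp [hMw a ha haW]
    have hcard2 : 2 ≤ M'.card := by
      by_contra hlt
      push_neg at hlt
      have h0 : M'.card ≠ 0 := fun h => hne0.ne_empty (Finset.card_eq_zero.1 h)
      have hle : M'.card = 1 := by omega
      obtain ⟨u, hu⟩ := Finset.card_eq_one.1 hle
      exact hnes u hu
    have hM2 : M' = ({x, w} : Finset α) := by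
      refine Finset.eq_of_subset_of_card_le hsub ?_
      have : ({x, w} : Finset α).card = 2 := by
        rw [Finset.card_insert_of_notMem (by simp [hxw])]
        simp
      omega
    rw [hM2] at hM'
    have hσ : Function.Involutive (Equiv.swap w x : α → α) := fun a => Equiv.swap_apply_self w x a
    have hkey := swap_edge h3 hxw hM'
    have hV : ∀ a, a ∈ verts \ {v, x} ↔ (Equiv.swap w x) a ∈ verts \ {v, w} := by
      intro a
      rcases eq_or_ne a w with rfl | haw
      · rw [Equiv.swap_apply_left]
        constructor
        · intro _
          rw [Finset.mem_sdiff, Finset.mem_insert, Finset.mem_singleton]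
          push_neg
          exact ⟨hxverts, hxv, hxw⟩
        · intro _
          rw [Finset.mem_sdiff, Finset.mem_insert, Finset.mem_singleton]
          push_neg
          exact ⟨hw, fun h => hvw h.symm, fun h => hxw h.symm⟩
      · rcases eq_or_ne a x with rfl | hax
        · rw [Equiv.swap_apply_right]
          constructor
          · intro hmem
            rw [Finset.mem_sdiff, Finset.mem_insert, Finset.mem_singleton] at hmem
            push_neg at hmem
            exact absurd rfl hmem.2.2
          · intro hmem
            rw [Finset.mem_sdiff, Finset.mem_insert, Finset.mem_singleton] at hmem
            push_neg at hmem
            exact absurd rfl hmem.2.2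
        · rw [Equiv.swap_apply_of_ne_of_ne haw hax]
          rw [Finset.mem_sdiff, Finset.mem_insert, Finset.mem_singleton,
            Finset.mem_sdiff, Finset.mem_insert, Finset.mem_singleton]
          push_neg
          constructor
          · rintro ⟨h1, h2, -⟩
            exact ⟨h1, h2, haw⟩
          · rintro ⟨h1, h2, -⟩
            exact ⟨h1, h2, hax⟩
    have hE1 : ∀ e ∈ edges, e ⊆ verts \ {v, x} → e.image (Equiv.swap w x) ∈ edges := by
      intro e he hs
      refine hkey e he fun hve => ?_
      have := hs hve
      rw [Finset.mem_sdiff, Finset.mem_insert] at this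
      exact this.2 (Or.inl rfl)
    have hE2 : ∀ e ∈ edges, e ⊆ verts \ {v, w} → e.image (Equiv.swap w x) ∈ edges := by
      intro e he hs
      refine hkey e he fun hve => ?_
      have := hs hve
      rw [Finset.mem_sdiff, Finset.mem_insert] at this
      exact this.2 (Or.inl rfl)
    have hcard : (verts \ {v, x}).card = (verts \ {v, w}).card := by
      have hs1 : ({v, x} : Finset α) ⊆ verts := by
        intro a ha
        rw [Finset.mem_insert, Finset.mem_singleton] at ha
        rcases ha with rfl | rfl
        · exact hv
        · exact hxverts
      have hs2 : ({v, w} : Finset α) ⊆ verts := by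
        intro a ha
        rw [Finset.mem_insert, Finset.mem_singleton] at ha
        rcases ha with rfl | rfl
        · exact hv
        · exact hw
      rw [Finset.card_sdiff_of_subset hs1, Finset.card_sdiff_of_subset hs2,
        Finset.card_insert_of_notMem (fun h => hxv (Finset.mem_singleton.1 h).symm),
        Finset.card_insert_of_notMem (fun h => hvw (Finset.mem_singleton.1 h)),
        Finset.card_singleton, Finset.card_singleton]
    have hpx := prime_image hσ hV hE1 hE2 hcard hprime
    have hadj : PrimAdj verts edges v x := ⟨fun h => hxv h.symm, hv, hxverts, hpx⟩
    exact hxw (hdeg x hadj)
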